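/- (Main Theorem, parts 1–3) Suppose a_i : X → ℝ^m, b_i : X → ℝ (i = 1,…,p) are Lipschitz with ‖a_i(x)‖ = 1 for all x, π_des : X → ℝ^m is Lipschitz, and π_f : X → ℝ^m is Lipschitz, bounded, and satisfies a_i(x)ᵀπ_f(x) ≤ b_i(x) for all i, x. Define r(x) = min_i (b_i(x) − a_i(x)ᵀπ_f(x)) and π_socp(x) = π_f(x) + Proj_{r(x)}(π_des(x) − π_f(x)), where Proj_r is projection onto the closed ball of radius r at the origin. Then: (1) π_socp(x) is the unique minimizer of ‖u − π_des(x)‖² over {u : ‖u − π_f(x)‖ ≤ r(x)}; (2) π_socp(x) ∈ K(x) = {u : a_i(x)ᵀu ≤ b_i(x) ∀i}; (3) π_socp is Lipschitz on X. -/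

import Mathlib

open scoped RealInnerProductSpace

/-- Projection onto the closed origin-centered ball of radius `r`
(equals `0` when `u = 0`). -/
noncomputable def projBall (m : ℕ) (r : ℝ) (u : EuclideanSpace ℝ (Fin m)) :
    EuclideanSpace ℝ (Fin m) :=
  (min r ‖u‖ / ‖u‖) • u

/-- The tightened radius `r(x) = min_i (b_i(x) − a_i(x)ᵀπ_f(x))`. -/
noncomputable def rSocp (n m p : ℕ)
    (a : Fin p → EuclideanSpace ℝ (Fin n) → EuclideanSpace ℝ (Fin m))
    (b : Fin p → EuclideanSpace ℝ (Fin n) → ℝ)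
    (πf : EuclideanSpace ℝ (Fin n) → EuclideanSpace ℝ (Fin m))
    (x : EuclideanSpace ℝ (Fin n)) : ℝ :=
  ⨅ i, (b i x - ⟪a i x, πf x⟫)

/-- The SOCP solution `π_socp(x) = π_f(x) + Proj_{r(x)}(π_des(x) − π_f(x))`. -/
noncomputable def piSocp (n m p : ℕ)
    (a : Fin p → EuclideanSpace ℝ (Fin n) → EuclideanSpace ℝ (Fin m))
    (b : Fin p → EuclideanSpace ℝ (Fin n) → ℝ)
    (πdes πf : EuclideanSpace ℝ (Fin n) → EuclideanSpace ℝ (Fin m))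
    (x : EuclideanSpace ℝ (Fin n)) : EuclideanSpace ℝ (Fin m) :=
  πf x + projBall m (rSocp n m p a b πf x) (πdes x - πf x)

lemma norm_projBall_le {m : ℕ} {r : ℝ} (hr : 0 ≤ r) (u : EuclideanSpace ℝ (Fin m)) :
    ‖projBall m r u‖ ≤ r := by
  rcases eq_or_ne u 0 with h | h
  · simp [projBall, h, hr]
  · have hu : 0 < ‖u‖ := norm_pos_iff.mpr h
    have hmin : 0 ≤ min r ‖u‖ := le_min hr (norm_nonneg u)
    rw [projBall, norm_smul, Real.norm_eq_abs,
      abs_of_nonneg (div_nonneg hmin hu.le), div_mul_cancel₀ _ hu.ne']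
    exact min_le_left _ _

lemma projBall_varineq {m : ℕ} {r : ℝ} (hr : 0 ≤ r) (u w : EuclideanSpace ℝ (Fin m))
    (hw : ‖w‖ ≤ r) : ⟪u - projBall m r u, w - projBall m r u⟫ ≤ 0 := by
  rcases eq_or_ne u 0 with h | h
  · simp [projBall, h]
  · have hu : 0 < ‖u‖ := norm_pos_iff.mpr h
    rcases le_or_gt ‖u‖ r with hle | hlt
    · have : projBall m r u = u := by
        rw [projBall, min_eq_right hle, div_self hu.ne', one_smul]
      simp [this]
    · have hproj : projBall m r u = (r / ‖u‖) • u := by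
        rw [projBall, min_eq_left hlt.le]
      rw [hproj]
      have h1 : u - (r / ‖u‖) • u = (1 - r / ‖u‖) • u := by
        rw [sub_smul, one_smul]
      rw [h1, real_inner_smul_left, inner_sub_right, real_inner_smul_right,
        real_inner_self_eq_norm_sq]
      have hfac : 0 ≤ 1 - r / ‖u‖ := by
        rw [sub_nonneg, div_le_one hu]; exact hlt.le
      have hcs : ⟪u, w⟫ ≤ ‖u‖ * ‖w‖ := real_inner_le_norm u w
      have h2 : ⟪u, w⟫ - r / ‖u‖ * ‖u‖ ^ 2 ≤ 0 := by
        have : r / ‖u‖ * ‖u‖ ^ 2 = r * ‖u‖ := by field_simp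
        rw [this]
        nlinarith [mul_le_mul_of_nonneg_left hw hu.le]
      exact mul_nonpos_of_nonneg_of_nonpos hfac h2

lemma projBall_contract {m : ℕ} {r : ℝ} (hr : 0 ≤ r) (u u' : EuclideanSpace ℝ (Fin m)) :
    ‖projBall m r u - projBall m r u'‖ ≤ ‖u - u'‖ := by
  set P := projBall m r u
  set Q := projBall m r u'
  have h1 : ⟪u - P, Q - P⟫ ≤ 0 := projBall_varineq hr u Q (norm_projBall_le hr u')
  have h2 : ⟪u' - Q, P - Q⟫ ≤ 0 := projBall_varineq hr u' P (norm_projBall_le hr u)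
  have key : ‖P - Q‖ ^ 2 ≤ ⟪u - u', P - Q⟫ := by
    have e : ⟪u - u', P - Q⟫ - ‖P - Q‖ ^ 2 = -⟪u - P, Q - P⟫ - ⟪u' - Q, P - Q⟫ := by
      rw [← real_inner_self_eq_norm_sq]
      simp only [inner_sub_left, inner_sub_right]
      linarith [real_inner_comm Q P]
    nlinarith [e]
  have hcs : ⟪u - u', P - Q⟫ ≤ ‖u - u'‖ * ‖P - Q‖ := real_inner_le_norm _ _
  rcases eq_or_lt_of_le (norm_nonneg (P - Q)) with h0 | h0
  · rw [← h0]; exact norm_nonneg _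
  · nlinarith

lemma projBall_radius {m : ℕ} {r r' : ℝ} (u : EuclideanSpace ℝ (Fin m)) :
    ‖projBall m r u - projBall m r' u‖ ≤ |r - r'| := by
  rcases eq_or_ne u 0 with h | h
  · simp [projBall, h, abs_nonneg]
  · have hu : 0 < ‖u‖ := norm_pos_iff.mpr h
    have : projBall m r u - projBall m r' u
        = ((min r ‖u‖ - min r' ‖u‖) / ‖u‖) • u := by
      rw [projBall, projBall, ← sub_smul, ← sub_div]
    rw [this, norm_smul, Real.norm_eq_abs, abs_div, abs_of_nonneg hu.le,
      div_mul_cancel₀ _ hu.ne']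
    have habs1 := le_abs_self (r - r')
    have habs2 := neg_abs_le (r - r')
    rcases le_total r ‖u‖ with h1 | h1 <;> rcases le_total r' ‖u‖ with h2 | h2
    · rw [min_eq_left h1, min_eq_left h2]
    · rw [min_eq_left h1, min_eq_right h2, abs_sub_le_iff]
      constructor <;> linarith
    · rw [min_eq_right h1, min_eq_left h2, abs_sub_le_iff]
      constructor <;> linarith
    · rw [min_eq_right h1, min_eq_right h2, sub_self, abs_zero]
      exact abs_nonneg _

/-- Main Theorem, parts 1–3. -/
theorem main_theorem (n m p : ℕ) (hp : 0 < p)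
    (X : Set (EuclideanSpace ℝ (Fin n)))
    (a : Fin p → EuclideanSpace ℝ (Fin n) → EuclideanSpace ℝ (Fin m))
    (b : Fin p → EuclideanSpace ℝ (Fin n) → ℝ)
    (πdes πf : EuclideanSpace ℝ (Fin n) → EuclideanSpace ℝ (Fin m))
    (La Lb : Fin p → NNReal) (Ldes Lf U : NNReal)
    (ha : ∀ i, ∀ x ∈ X, ‖a i x‖ = 1)
    (haL : ∀ i, LipschitzOnWith (La i) (a i) X)
    (hbL : ∀ i, LipschitzOnWith (Lb i) (b i) X)
    (hdesL : LipschitzOnWith Ldes πdes X)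
    (hfL : LipschitzOnWith Lf πf X)
    (hU : ∀ x ∈ X, ‖πf x‖ ≤ (U : ℝ))
    (hfeas : ∀ i, ∀ x ∈ X, ⟪a i x, πf x⟫ ≤ b i x) :
    (∀ x ∈ X,
      ‖piSocp n m p a b πdes πf x - πf x‖ ≤ rSocp n m p a b πf x ∧
      ∀ u : EuclideanSpace ℝ (Fin m), ‖u - πf x‖ ≤ rSocp n m p a b πf x →
        u ≠ piSocp n m p a b πdes πf x →
        ‖piSocp n m p a b πdes πf x - πdes x‖ < ‖u - πdes x‖) ∧
    (∀ x ∈ X, ∀ i, ⟪a i x, piSocp n m p a b πdes πf x⟫ ≤ b i x) ∧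
    (∃ L : NNReal, LipschitzOnWith L (piSocp n m p a b πdes πf) X) := by
  have hpne : Nonempty (Fin p) := ⟨⟨0, hp⟩⟩
  set r : EuclideanSpace ℝ (Fin n) → ℝ := rSocp n m p a b πf with hrdef
  set v : EuclideanSpace ℝ (Fin n) → EuclideanSpace ℝ (Fin m) :=
    fun x => πdes x - πf x with hvdef
  have hrnn : ∀ x ∈ X, 0 ≤ r x := fun x hx =>
    le_ciInf fun i => sub_nonneg.mpr (hfeas i x hx)
  have hrle : ∀ x i, r x ≤ b i x - ⟪a i x, πf x⟫ := fun x i =>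
    ciInf_le (Set.Finite.bddBelow (Set.finite_range _)) i
  have hdiff : ∀ x, piSocp n m p a b πdes πf x - πf x = projBall m (r x) (v x) := by
    intro x
    simp only [piSocp, hvdef, hrdef]
    abel
  refine ⟨?_, ?_, ?_⟩
  · intro x hx
    have hr0 := hrnn x hx
    refine ⟨by rw [hdiff x]; exact norm_projBall_le hr0 _, ?_⟩
    intro u hu hne
    set P := projBall m (r x) (v x) with hP
    set w := u - πf x with hw
    have hvi : ⟪v x - P, w - P⟫ ≤ 0 := projBall_varineq hr0 (v x) w hu
    have epi : piSocp n m p a b πdes πf x = πf x + P := rfl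
    have e1 : piSocp n m p a b πdes πf x - πdes x = P - v x := by
      rw [epi, hvdef]; beta_reduce; abel
    have e2 : u - πdes x = w - v x := by rw [hw, hvdef]; beta_reduce; abel
    have hwP : w ≠ P := by
      intro hcon
      apply hne
      rw [epi, ← hcon, hw]
      abel
    have key : ‖w - v x‖ ^ 2 = ‖w - P‖ ^ 2 + 2 * ⟪w - P, P - v x⟫ + ‖P - v x‖ ^ 2 := by
      have h3 : w - v x = (w - P) + (P - v x) := by abel
      rw [h3, norm_add_sq_real]
    have hpos : 0 < ‖w - P‖ := norm_pos_iff.mpr (sub_ne_zero.mpr hwP)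
    have hip : 0 ≤ ⟪w - P, P - v x⟫ := by
      have h4 : P - v x = -(v x - P) := by abel
      rw [h4, inner_neg_right, real_inner_comm]
      linarith
    rw [e1, e2]
    have hsq : ‖P - v x‖ ^ 2 < ‖w - v x‖ ^ 2 := by nlinarith
    exact lt_of_pow_lt_pow_left₀ 2 (norm_nonneg _) hsq
  · intro x hx i
    have hr0 := hrnn x hx
    have h1 : ⟪a i x, piSocp n m p a b πdes πf x⟫
        = ⟪a i x, πf x⟫ + ⟪a i x, projBall m (r x) (v x)⟫ := by
      have epi : piSocp n m p a b πdes πf x = πf x + projBall m (r x) (v x) := rfl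
      rw [epi, inner_add_right]
    have h2 : ⟪a i x, projBall m (r x) (v x)⟫ ≤ ‖a i x‖ * ‖projBall m (r x) (v x)‖ :=
      real_inner_le_norm _ _
    rw [ha i x hx, one_mul] at h2
    have h3 := norm_projBall_le hr0 (v x)
    have h4 := hrle x i
    linarith [h1.le, h1.ge]
  · set C : ℝ := ∑ i : Fin p, ((Lb i : ℝ) + (La i : ℝ) * (U : ℝ) + (Lf : ℝ)) with hC
    have hterm : ∀ i : Fin p, 0 ≤ (Lb i : ℝ) + (La i : ℝ) * (U : ℝ) + (Lf : ℝ) := by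
      intro i; positivity
    have hC0 : 0 ≤ C := Finset.sum_nonneg fun i _ => hterm i
    have hr_lip : ∀ x ∈ X, ∀ y ∈ X, r x ≤ r y + C * dist x y := by
      intro x hx y hy
      have hd0 : (0:ℝ) ≤ dist x y := dist_nonneg
      rw [← sub_le_iff_le_add]
      refine le_ciInf fun i => ?_
      have hfx : r x ≤ b i x - ⟪a i x, πf x⟫ := hrle x i
      have hb' : |b i x - b i y| ≤ (Lb i : ℝ) * dist x y := by
        have := (hbL i).dist_le_mul x hx y hy
        rwa [Real.dist_eq] at this
      have ha' : ‖a i x - a i y‖ ≤ (La i : ℝ) * dist x y := by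
        have := (haL i).dist_le_mul x hx y hy
        rwa [dist_eq_norm] at this
      have hf' : ‖πf x - πf y‖ ≤ (Lf : ℝ) * dist x y := by
        have := hfL.dist_le_mul x hx y hy
        rwa [dist_eq_norm] at this
      have hinner : |⟪a i x, πf x⟫ - ⟪a i y, πf y⟫|
          ≤ ((La i : ℝ) * (U : ℝ) + (Lf : ℝ)) * dist x y := by
        have e : ⟪a i x, πf x⟫ - ⟪a i y, πf y⟫
            = ⟪a i x - a i y, πf x⟫ + ⟪a i y, πf x - πf y⟫ := by
          rw [inner_sub_left, inner_sub_right]; ring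
        rw [e]
        have c1 : |⟪a i x - a i y, πf x⟫| ≤ ‖a i x - a i y‖ * ‖πf x‖ :=
          abs_real_inner_le_norm _ _
        have c2 : |⟪a i y, πf x - πf y⟫| ≤ ‖a i y‖ * ‖πf x - πf y‖ :=
          abs_real_inner_le_norm _ _
        rw [ha i y hy, one_mul] at c2
        have cU : ‖a i x - a i y‖ * ‖πf x‖ ≤ ((La i : ℝ) * dist x y) * (U : ℝ) :=
          mul_le_mul ha' (hU x hx) (norm_nonneg _) (by positivity)
        calc |⟪a i x - a i y, πf x⟫ + ⟪a i y, πf x - πf y⟫|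
            ≤ |⟪a i x - a i y, πf x⟫| + |⟪a i y, πf x - πf y⟫| := abs_add_le _ _
          _ ≤ ((La i : ℝ) * dist x y) * (U : ℝ) + (Lf : ℝ) * dist x y := by
              have := le_trans c2 hf'
              linarith [le_trans c1 cU]
          _ = ((La i : ℝ) * (U : ℝ) + (Lf : ℝ)) * dist x y := by ring
      have hle_C : (Lb i : ℝ) + (La i : ℝ) * (U : ℝ) + (Lf : ℝ) ≤ C :=
        Finset.single_le_sum (fun j _ => hterm j) (Finset.mem_univ i)
      have hmul : ((Lb i : ℝ) + (La i : ℝ) * (U : ℝ) + (Lf : ℝ)) * dist x y ≤ C * dist x y :=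
        mul_le_mul_of_nonneg_right hle_C hd0
      have hb2 := abs_le.mp hb'
      have hi2 := abs_le.mp hinner
      nlinarith [hb2.1, hb2.2, hi2.1, hi2.2]
    have hr_abs : ∀ x ∈ X, ∀ y ∈ X, |r x - r y| ≤ C * dist x y := by
      intro x hx y hy
      rw [abs_sub_le_iff]
      constructor
      · linarith [hr_lip x hx y hy]
      · have := hr_lip y hy x hx
        rw [dist_comm] at this
        linarith
    set Ltot : ℝ := (Lf : ℝ) + C + ((Ldes : ℝ) + (Lf : ℝ)) with hLtot
    have hL0 : 0 ≤ Ltot := by positivity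
    refine ⟨Ltot.toNNReal, LipschitzOnWith.of_dist_le_mul fun x hx y hy => ?_⟩
    rw [Real.coe_toNNReal _ hL0, dist_eq_norm]
    have hf' : ‖πf x - πf y‖ ≤ (Lf : ℝ) * dist x y := by
      have := hfL.dist_le_mul x hx y hy
      rwa [dist_eq_norm] at this
    have hdes' : ‖πdes x - πdes y‖ ≤ (Ldes : ℝ) * dist x y := by
      have := hdesL.dist_le_mul x hx y hy
      rwa [dist_eq_norm] at this
    have hv' : ‖v x - v y‖ ≤ ((Ldes : ℝ) + (Lf : ℝ)) * dist x y := by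
      have e : v x - v y = (πdes x - πdes y) - (πf x - πf y) := by
        simp only [hvdef]; abel
      rw [e]
      calc ‖(πdes x - πdes y) - (πf x - πf y)‖
          ≤ ‖πdes x - πdes y‖ + ‖πf x - πf y‖ := norm_sub_le _ _
        _ ≤ (Ldes : ℝ) * dist x y + (Lf : ℝ) * dist x y := add_le_add hdes' hf'
        _ = ((Ldes : ℝ) + (Lf : ℝ)) * dist x y := by ring
    have hsplit : ‖projBall m (r x) (v x) - projBall m (r y) (v y)‖
        ≤ |r x - r y| + ‖v x - v y‖ := by
      calc ‖projBall m (r x) (v x) - projBall m (r y) (v y)‖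
          ≤ ‖projBall m (r x) (v x) - projBall m (r y) (v x)‖
            + ‖projBall m (r y) (v x) - projBall m (r y) (v y)‖ := by
            have := dist_triangle (projBall m (r x) (v x)) (projBall m (r y) (v x))
              (projBall m (r y) (v y))
            simpa [dist_eq_norm] using this
        _ ≤ |r x - r y| + ‖v x - v y‖ :=
            add_le_add (projBall_radius _) (projBall_contract (hrnn y hy) _ _)
    have hdecomp : piSocp n m p a b πdes πf x - piSocp n m p a b πdes πf y
        = (πf x - πf y) + (projBall m (r x) (v x) - projBall m (r y) (v y)) := by
      show (πf x + projBall m (r x) (v x)) - (πf y + projBall m (r y) (v y)) = _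
      abel
    rw [hdecomp]
    calc ‖(πf x - πf y) + (projBall m (r x) (v x) - projBall m (r y) (v y))‖
        ≤ ‖πf x - πf y‖ + ‖projBall m (r x) (v x) - projBall m (r y) (v y)‖ :=
          norm_add_le _ _
      _ ≤ (Lf : ℝ) * dist x y + (|r x - r y| + ‖v x - v y‖) := by
          have := hr_abs x hx y hy
          linarith [hsplit, hf']
      _ ≤ (Lf : ℝ) * dist x y + (C * dist x y + ((Ldes : ℝ) + (Lf : ℝ)) * dist x y) := by
          have := hr_abs x hx y hy
          linarith [hv']
      _ = Ltot * dist x y := by rw [hLtot]; ring
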